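/- Proposition 3.2(ii): Suppose f(X) = ⟨C, X⟩ for a symmetric matrix C ∈ 𝕊^n, and suppose there exists y* ∈ ℝ^m such that the matrix C − Σ_{i=1}^m y*_i A_i is positive definite. Let λ_min > 0 and λ_max be its smallest and largest eigenvalues and κ_c = λ_max/λ_min. If ρ₀ ≥ 1 + λ_max κ_c, then for every β ∈ ℝ the level set S_β = {(U,V) ∈ ℝ^{n×r} × ℝ^{n×r} : ⟨C, UVᵀ⟩ + (ρ₀/2)‖U − V‖_F² + (ρ₀/2)‖𝒜(UVᵀ) − b‖_2² ≤ β} is either compact or empty; moreover every (U,V) ∈ S_β satisfies ‖U‖_F² ≤ (1/λ_min)(‖y*‖_2² − 2⟨y*, b⟩ + 2β) and the same bound holds for ‖V‖_F². -/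

import Mathlib

open Matrix
open scoped BigOperators

noncomputable section

/-- Frobenius inner product of two real matrices. -/
def frobInner {α β : Type*} [Fintype α] [Fintype β] (X Y : Matrix α β ℝ) : ℝ :=
  ∑ i, ∑ j, X i j * Y i j

/-- Frobenius norm of a real matrix. -/
def frobNorm {α β : Type*} [Fintype α] [Fintype β] (X : Matrix α β ℝ) : ℝ :=
  Real.sqrt (∑ i, ∑ j, (X i j) ^ 2)

/-- Euclidean norm of a real vector. -/
def vecNorm {α : Type*} [Fintype α] (v : α → ℝ) : ℝ :=
  Real.sqrt (∑ i, (v i) ^ 2)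

/-- The linear map `𝒜(X) = (⟨A 1, X⟩, …, ⟨A m, X⟩)`. -/
def Aop {n m : ℕ} (A : Fin m → Matrix (Fin n) (Fin n) ℝ)
    (X : Matrix (Fin n) (Fin n) ℝ) : Fin m → ℝ :=
  fun i => frobInner (A i) X

/-- `s_A = Σ_i ‖A_i‖_F²`. -/
def sA {n m : ℕ} (A : Fin m → Matrix (Fin n) (Fin n) ℝ) : ℝ :=
  ∑ i, (frobNorm (A i)) ^ 2

/-- `(U, V, λ)` is an ε-KKT point of the penalized problem
`min f(UVᵀ) + (γ/2)‖U-V‖² s.t. 𝒜(UVᵀ) = b`, where `grad` denotes the gradient of `f`. -/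
def IsPenEpsKKT {n m r : ℕ} (grad : Matrix (Fin n) (Fin n) ℝ → Matrix (Fin n) (Fin n) ℝ)
    (A : Fin m → Matrix (Fin n) (Fin n) ℝ) (b : Fin m → ℝ) (γ ε : ℝ)
    (U V : Matrix (Fin n) (Fin r) ℝ) (lam : Fin m → ℝ) : Prop :=
  frobNorm (grad (U * Vᵀ) * V + γ • (U - V) + ∑ i, lam i • (A i * V)) ≤ ε ∧
  frobNorm (grad (V * Uᵀ) * U + γ • (V - U) + ∑ i, lam i • (A i * U)) ≤ ε ∧
  vecNorm (fun i => Aop A (U * Vᵀ) i - b i) ≤ ε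

/-- `(U, λ)` is an ε-KKT point of the Burer–Monteiro problem
`min f(UUᵀ) s.t. 𝒜(UUᵀ) = b`, where `grad` denotes the gradient of `f`. -/
def IsBMEpsKKT {n m r : ℕ} (grad : Matrix (Fin n) (Fin n) ℝ → Matrix (Fin n) (Fin n) ℝ)
    (A : Fin m → Matrix (Fin n) (Fin n) ℝ) (b : Fin m → ℝ) (ε : ℝ)
    (U : Matrix (Fin n) (Fin r) ℝ) (lam : Fin m → ℝ) : Prop :=
  frobNorm ((2 : ℝ) • (grad (U * Uᵀ) * U) + ∑ i, lam i • (A i * U)) ≤ ε ∧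
  vecNorm (fun i => Aop A (U * Uᵀ) i - b i) ≤ ε

/-- The augmented Lagrangian `L_ρ(U,V,λ)` of the penalized problem. -/
def augL {n m r : ℕ} (f : Matrix (Fin n) (Fin n) ℝ → ℝ)
    (A : Fin m → Matrix (Fin n) (Fin n) ℝ) (b : Fin m → ℝ) (ρ γ : ℝ)
    (U V : Matrix (Fin n) (Fin r) ℝ) (lam : Fin m → ℝ) : ℝ :=
  f (U * Vᵀ) + γ / 2 * (frobNorm (U - V)) ^ 2
    + ∑ i, lam i * (Aop A (U * Vᵀ) i - b i)
    + ρ / 2 * (vecNorm (fun i => Aop A (U * Vᵀ) i - b i)) ^ 2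

/-- The level set `S_β` of the penalty function. -/
def Sset {n m r : ℕ} (f : Matrix (Fin n) (Fin n) ℝ → ℝ)
    (A : Fin m → Matrix (Fin n) (Fin n) ℝ) (b : Fin m → ℝ) (ρ₀ β : ℝ) :
    Set (Matrix (Fin n) (Fin r) ℝ × Matrix (Fin n) (Fin r) ℝ) :=
  {p | f (p.1 * p.2ᵀ) + ρ₀ / 2 * (frobNorm (p.1 - p.2)) ^ 2
      + ρ₀ / 2 * (vecNorm (fun i => Aop A (p.1 * p.2ᵀ) i - b i)) ^ 2 ≤ β}

/-- `𝒞(U)`: the `nr × m` matrix whose `i`-th column is the vectorization of `A_i U`. -/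
def Cmat {n m r : ℕ} (A : Fin m → Matrix (Fin n) (Fin n) ℝ)
    (U : Matrix (Fin n) (Fin r) ℝ) : Matrix (Fin n × Fin r) (Fin m) ℝ :=
  Matrix.of fun p i => (A i * U) p.1 p.2

/-- Smallest singular value of a real matrix, as the infimum of `‖Mx‖` over unit vectors. -/
def sigmaMin {α β : Type*} [Fintype α] [Fintype β] (M : Matrix α β ℝ) : ℝ :=
  sInf {s | ∃ x : β → ℝ, vecNorm x = 1 ∧ s = vecNorm (M.mulVec x)}

/-- Norm of the full gradient of the augmented Lagrangian at `(U, V, λ)`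
(for symmetric `f`, with `grad` the gradient of `f`). -/
def gradAugLNorm {n m r : ℕ} (grad : Matrix (Fin n) (Fin n) ℝ → Matrix (Fin n) (Fin n) ℝ)
    (A : Fin m → Matrix (Fin n) (Fin n) ℝ) (b : Fin m → ℝ) (ρ γ : ℝ)
    (U V : Matrix (Fin n) (Fin r) ℝ) (lam : Fin m → ℝ) : ℝ :=
  Real.sqrt
    ((frobNorm (grad (U * Vᵀ) * V + γ • (U - V)
        + ∑ i, (lam i + ρ * (Aop A (U * Vᵀ) i - b i)) • (A i * V))) ^ 2
      + (frobNorm (grad (V * Uᵀ) * U + γ • (V - U)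
        + ∑ i, (lam i + ρ * (Aop A (U * Vᵀ) i - b i)) • (A i * U))) ^ 2
      + (vecNorm (fun i => Aop A (U * Vᵀ) i - b i)) ^ 2)

/-- Distance between two primal-dual triples, induced by the Frobenius/Euclidean norms. -/
def tripDist {n m r : ℕ}
    (p q : Matrix (Fin n) (Fin r) ℝ × Matrix (Fin n) (Fin r) ℝ × (Fin m → ℝ)) : ℝ :=
  Real.sqrt ((frobNorm (p.1 - q.1)) ^ 2 + (frobNorm (p.2.1 - q.2.1)) ^ 2
    + (vecNorm (fun i => p.2.2 i - q.2.2 i)) ^ 2)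

/-- The set `𝒲` of KKT points of the penalized problem. -/
def KKTset {n m : ℕ} (r : ℕ) (grad : Matrix (Fin n) (Fin n) ℝ → Matrix (Fin n) (Fin n) ℝ)
    (A : Fin m → Matrix (Fin n) (Fin n) ℝ) (b : Fin m → ℝ) (γ : ℝ) :
    Set (Matrix (Fin n) (Fin r) ℝ × Matrix (Fin n) (Fin r) ℝ × (Fin m → ℝ)) :=
  {p | IsPenEpsKKT grad A b γ 0 p.1 p.2.1 p.2.2}

lemma aux_frobNorm_sq {α β : Type*} [Fintype α] [Fintype β] (X : Matrix α β ℝ) :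
    (frobNorm X) ^ 2 = ∑ i, ∑ j, (X i j) ^ 2 :=
  Real.sq_sqrt (Finset.sum_nonneg fun _ _ => Finset.sum_nonneg fun _ _ => sq_nonneg _)
lemma aux_vecNorm_sq {α : Type*} [Fintype α] (v : α → ℝ) :
    (vecNorm v) ^ 2 = ∑ i, (v i) ^ 2 :=
  Real.sq_sqrt (Finset.sum_nonneg fun i _ => sq_nonneg _)

lemma aux_posSemidef_sub_smul_one {n : ℕ} {M : Matrix (Fin n) (Fin n) ℝ}
    (hM : M.IsHermitian) (c : ℝ) (h : ∀ i, c ≤ hM.eigenvalues i) :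
    (M - c • 1).PosSemidef := by
  have h1 : M - c • (1 : Matrix (Fin n) (Fin n) ℝ) =
      (hM.eigenvectorUnitary : Matrix (Fin n) (Fin n) ℝ) *
        diagonal (fun i => hM.eigenvalues i - c) *
        ((hM.eigenvectorUnitary : Matrix (Fin n) (Fin n) ℝ))ᴴ := by
    have hd : diagonal (fun i => hM.eigenvalues i - c) =
        diagonal (RCLike.ofReal ∘ hM.eigenvalues) - c • (1 : Matrix (Fin n) (Fin n) ℝ) := by
      rw [smul_one_eq_diagonal, diagonal_sub]
      rfl
    rw [hd, mul_sub, sub_mul, ← Matrix.star_eq_conjTranspose]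
    conv_lhs => rw [hM.spectral_theorem]
    congr 1
    rw [mul_smul_comm, smul_mul_assoc, mul_one, Matrix.mem_unitaryGroup_iff.mp hM.eigenvectorUnitary.2]
  rw [h1]
  exact (posSemidef_diagonal_iff.mpr fun i => sub_nonneg.mpr (h i)).mul_mul_conjTranspose_same _

lemma aux_posSemidef_smul_one_sub {n : ℕ} {M : Matrix (Fin n) (Fin n) ℝ}
    (hM : M.IsHermitian) (c : ℝ) (h : ∀ i, hM.eigenvalues i ≤ c) :
    (c • 1 - M).PosSemidef := by
  have h1 : c • (1 : Matrix (Fin n) (Fin n) ℝ) - M =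
      (hM.eigenvectorUnitary : Matrix (Fin n) (Fin n) ℝ) *
        diagonal (fun i => c - hM.eigenvalues i) *
        ((hM.eigenvectorUnitary : Matrix (Fin n) (Fin n) ℝ))ᴴ := by
    have hd : diagonal (fun i => c - hM.eigenvalues i) =
        c • (1 : Matrix (Fin n) (Fin n) ℝ) - diagonal (RCLike.ofReal ∘ hM.eigenvalues) := by
      rw [smul_one_eq_diagonal, diagonal_sub]
      rfl
    rw [hd, mul_sub, sub_mul, ← Matrix.star_eq_conjTranspose]
    conv_lhs => rw [hM.spectral_theorem]
    congr 1
    rw [mul_smul_comm, smul_mul_assoc, mul_one, Matrix.mem_unitaryGroup_iff.mp hM.eigenvectorUnitary.2]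
  rw [h1]
  exact (posSemidef_diagonal_iff.mpr fun i => sub_nonneg.mpr (h i)).mul_mul_conjTranspose_same _

lemma aux_quad_lower {n : ℕ} {M : Matrix (Fin n) (Fin n) ℝ}
    (hM : M.IsHermitian) {c : ℝ} (h : ∀ i, c ≤ hM.eigenvalues i) (x : Fin n → ℝ) :
    c * (∑ i, x i ^ 2) ≤ x ⬝ᵥ M.mulVec x := by
  have h0 := (aux_posSemidef_sub_smul_one hM c h).dotProduct_mulVec_nonneg x
  simp only [star_trivial, sub_mulVec, smul_mulVec, one_mulVec, dotProduct_sub,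
    dotProduct_smul, smul_eq_mul] at h0
  have hx : x ⬝ᵥ x = ∑ i, x i ^ 2 := by simp [dotProduct, sq]
  rw [hx] at h0
  linarith

lemma aux_quad_upper {n : ℕ} {M : Matrix (Fin n) (Fin n) ℝ}
    (hM : M.IsHermitian) {c : ℝ} (h : ∀ i, hM.eigenvalues i ≤ c) (x : Fin n → ℝ) :
    x ⬝ᵥ M.mulVec x ≤ c * (∑ i, x i ^ 2) := by
  have h0 := (aux_posSemidef_smul_one_sub hM c h).dotProduct_mulVec_nonneg x
  simp only [star_trivial, sub_mulVec, smul_mulVec, one_mulVec, dotProduct_sub,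
    dotProduct_smul, smul_eq_mul] at h0
  have hx : x ⬝ᵥ x = ∑ i, x i ^ 2 := by simp [dotProduct, sq]
  rw [hx] at h0
  linarith

lemma frobInner_mulT {n r : ℕ} (M : Matrix (Fin n) (Fin n) ℝ)
    (U V : Matrix (Fin n) (Fin r) ℝ) :
    frobInner M (U * Vᵀ) = ∑ k, (fun i => U i k) ⬝ᵥ M.mulVec (fun i => V i k) := by
  simp only [frobInner, mul_apply, transpose_apply, dotProduct, mulVec, Finset.mul_sum,
    Finset.sum_mul]
  rw [Finset.sum_congr rfl fun x _ => (Finset.sum_comm (γ := Fin n) (α := Fin r)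
    (f := fun x1 i => M x x1 * (U x i * V x1 i))), Finset.sum_comm]
  refine Finset.sum_congr rfl fun k _ => Finset.sum_congr rfl fun i _ =>
    Finset.sum_congr rfl fun j _ => by ring

lemma frobInner_symm {n r : ℕ} {M : Matrix (Fin n) (Fin n) ℝ} (hM : Mᵀ = M)
    (U V : Matrix (Fin n) (Fin r) ℝ) :
    frobInner M (V * Uᵀ) = frobInner M (U * Vᵀ) := by
  simp only [frobInner, mul_apply, transpose_apply]
  rw [Finset.sum_comm]
  refine Finset.sum_congr rfl fun i _ => Finset.sum_congr rfl fun j _ => ?_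
  rw [show M j i = M i j from (transpose_apply M i j).symm.trans (by rw [hM])]
  rw [Finset.mul_sum, Finset.mul_sum]
  exact Finset.sum_congr rfl fun k _ => by ring

lemma frobInner_sub_sum {n m : ℕ} (C : Matrix (Fin n) (Fin n) ℝ)
    (A : Fin m → Matrix (Fin n) (Fin n) ℝ) (y : Fin m → ℝ)
    (X : Matrix (Fin n) (Fin n) ℝ) :
    frobInner (C - ∑ i, y i • A i) X = frobInner C X - ∑ i, y i * frobInner (A i) X := by
  simp only [frobInner, Matrix.sub_apply, Matrix.sum_apply, Matrix.smul_apply, smul_eq_mul, sub_mul,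
    Finset.sum_mul, Finset.sum_sub_distrib, Finset.mul_sum]
  congr 1
  rw [Finset.sum_congr rfl fun x _ => (Finset.sum_comm (γ := Fin n) (α := Fin m)
    (f := fun x1 i => y i * A i x x1 * X x x1)), Finset.sum_comm]
  refine Finset.sum_congr rfl fun l _ => Finset.sum_congr rfl fun i _ =>
    Finset.sum_congr rfl fun j _ => by ring

lemma frobInner_sub_right {α β : Type*} [Fintype α] [Fintype β] (M X Y : Matrix α β ℝ) :
    frobInner M (X - Y) = frobInner M X - frobInner M Y := by
  simp [frobInner, mul_sub, Finset.sum_sub_distrib]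

lemma frobInner_add_right {α β : Type*} [Fintype α] [Fintype β] (M X Y : Matrix α β ℝ) :
    frobInner M (X + Y) = frobInner M X + frobInner M Y := by
  simp [frobInner, mul_add, Finset.sum_add_distrib]

lemma aux_frob_lower {n r : ℕ} {M : Matrix (Fin n) (Fin n) ℝ}
    (hM : M.IsHermitian) {c : ℝ} (h : ∀ i, c ≤ hM.eigenvalues i)
    (U : Matrix (Fin n) (Fin r) ℝ) :
    c * (frobNorm U) ^ 2 ≤ frobInner M (U * Uᵀ) := by
  rw [frobInner_mulT, aux_frobNorm_sq, Finset.sum_comm, Finset.mul_sum]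
  exact Finset.sum_le_sum fun k _ => aux_quad_lower hM h _

lemma aux_frob_upper {n r : ℕ} {M : Matrix (Fin n) (Fin n) ℝ}
    (hM : M.IsHermitian) {c : ℝ} (h : ∀ i, hM.eigenvalues i ≤ c)
    (U : Matrix (Fin n) (Fin r) ℝ) :
    frobInner M (U * Uᵀ) ≤ c * (frobNorm U) ^ 2 := by
  rw [frobInner_mulT, aux_frobNorm_sq, Finset.sum_comm, Finset.mul_sum]
  exact Finset.sum_le_sum fun k _ => aux_quad_upper hM h _

/-- Proposition 3.2(ii): for a linear objective with a strictly feasible dual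
point, the level sets are compact or empty, with an explicit bound on the factors. -/
theorem level_set_compact_linear_objective
    (n m r : ℕ) (hn : 0 < n) (hm : 0 < m) (hr : 0 < r)
    (A : Fin m → Matrix (Fin n) (Fin n) ℝ) (hAsym : ∀ i, (A i)ᵀ = A i)
    (b : Fin m → ℝ)
    (C : Matrix (Fin n) (Fin n) ℝ) (hC : Cᵀ = C)
    (ystar : Fin m → ℝ)
    (hPD : (C - ∑ i, ystar i • A i).PosDef)
    (lmin lmax : ℝ) (hlminpos : 0 < lmin)
    (hlmin : IsLeast (Set.range hPD.isHermitian.eigenvalues) lmin)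
    (hlmax : IsGreatest (Set.range hPD.isHermitian.eigenvalues) lmax)
    (ρ₀ : ℝ) (hρ₀ : 1 + lmax * (lmax / lmin) ≤ ρ₀) :
    ∀ β : ℝ,
      (IsCompact (Sset (r := r) (fun X => frobInner C X) A b ρ₀ β) ∨
        Sset (r := r) (fun X => frobInner C X) A b ρ₀ β = ∅) ∧
      ∀ p ∈ Sset (r := r) (fun X => frobInner C X) A b ρ₀ β,
        (frobNorm p.1) ^ 2 ≤ 1 / lmin * ((vecNorm ystar) ^ 2 - 2 * (∑ i, ystar i * b i) + 2 * β) ∧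
        (frobNorm p.2) ^ 2 ≤ 1 / lmin * ((vecNorm ystar) ^ 2 - 2 * (∑ i, ystar i * b i) + 2 * β) := by
  intro β
  set M : Matrix (Fin n) (Fin n) ℝ := C - ∑ i, ystar i • A i with hMdef
  have hlo : ∀ i, lmin ≤ hPD.isHermitian.eigenvalues i := fun i => hlmin.2 ⟨i, rfl⟩
  have hhi : ∀ i, hPD.isHermitian.eigenvalues i ≤ lmax := fun i => hlmax.2 ⟨i, rfl⟩
  have hml : lmin ≤ lmax := hlmin.2 hlmax.1
  have hlmaxpos : 0 < lmax := lt_of_lt_of_le hlminpos hml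
  have hdiv1 : (1 : ℝ) ≤ lmax / lmin := (one_le_div hlminpos).mpr hml
  have hρl : lmax ≤ ρ₀ := by nlinarith
  have hρ1 : 1 ≤ ρ₀ := by nlinarith
  have hMT : Mᵀ = M := by
    rw [hMdef, transpose_sub, hC, Matrix.transpose_sum]
    congr 1
    exact Finset.sum_congr rfl fun i _ => by rw [transpose_smul, hAsym]
  -- the key quantitative bound
  have key : ∀ p ∈ Sset (r := r) (fun X => frobInner C X) A b ρ₀ β,
      (frobNorm p.1) ^ 2 ≤ 1 / lmin * ((vecNorm ystar) ^ 2 - 2 * (∑ i, ystar i * b i) + 2 * β) ∧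
      (frobNorm p.2) ^ 2 ≤ 1 / lmin * ((vecNorm ystar) ^ 2 - 2 * (∑ i, ystar i * b i) + 2 * β) := by
    rintro ⟨U, V⟩ hp
    simp only [Sset, Set.mem_setOf_eq] at hp
    set t : Fin m → ℝ := fun i => Aop A (U * Vᵀ) i - b i with ht
    have h1 : frobInner M (U * Vᵀ)
        = frobInner C (U * Vᵀ) - ∑ i, ystar i * frobInner (A i) (U * Vᵀ) := by
      rw [hMdef, frobInner_sub_sum]
    have hexp : (U - V) * (U - V)ᵀ = U * Uᵀ - U * Vᵀ - (V * Uᵀ - V * Vᵀ) := by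
      rw [transpose_sub, Matrix.sub_mul, Matrix.mul_sub, Matrix.mul_sub]
    have h2 : frobInner M ((U - V) * (U - V)ᵀ)
        = frobInner M (U * Uᵀ) - 2 * frobInner M (U * Vᵀ) + frobInner M (V * Vᵀ) := by
      rw [hexp, frobInner_sub_right, frobInner_sub_right, frobInner_sub_right,
        frobInner_symm hMT U V]
      ring
    have h3 := aux_frob_lower hPD.isHermitian hlo U
    have h4 := aux_frob_lower hPD.isHermitian hlo V
    have h5 := aux_frob_upper hPD.isHermitian hhi (U - V)
    have h6 : 0 ≤ (∑ i, ystar i ^ 2) + 2 * (∑ i, ystar i * t i) + ∑ i, t i ^ 2 := by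
      have h := Finset.sum_nonneg fun i (_ : i ∈ Finset.univ) => sq_nonneg (ystar i + t i)
      calc (0:ℝ) ≤ ∑ i, (ystar i + t i) ^ 2 := h
        _ = (∑ i, ystar i ^ 2) + 2 * (∑ i, ystar i * t i) + ∑ i, t i ^ 2 := by
            rw [Finset.mul_sum, ← Finset.sum_add_distrib, ← Finset.sum_add_distrib]
            exact Finset.sum_congr rfl fun i _ => by ring
    have h7 : ∑ i, ystar i * frobInner (A i) (U * Vᵀ)
        = (∑ i, ystar i * t i) + ∑ i, ystar i * b i := by
      rw [← Finset.sum_add_distrib]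
      exact Finset.sum_congr rfl fun i _ => by
        have : t i = frobInner (A i) (U * Vᵀ) - b i := rfl
        rw [this]; ring
    have hd0 : 0 ≤ (frobNorm (U - V)) ^ 2 := sq_nonneg _
    have he0 : 0 ≤ (vecNorm t) ^ 2 := sq_nonneg _
    have hpd : lmax * (frobNorm (U - V)) ^ 2 ≤ ρ₀ * (frobNorm (U - V)) ^ 2 :=
      mul_le_mul_of_nonneg_right hρl hd0
    have hpe : 1 * (vecNorm t) ^ 2 ≤ ρ₀ * (vecNorm t) ^ 2 :=
      mul_le_mul_of_nonneg_right hρ1 he0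
    have hvy : (vecNorm ystar) ^ 2 = ∑ i, ystar i ^ 2 := aux_vecNorm_sq _
    have hvt : (vecNorm t) ^ 2 = ∑ i, t i ^ 2 := aux_vecNorm_sq _
    have hZ : lmin * ((frobNorm U) ^ 2 + (frobNorm V) ^ 2)
        ≤ (vecNorm ystar) ^ 2 - 2 * (∑ i, ystar i * b i) + 2 * β := by
      rw [← hvy, ← hvt] at h6
      linarith
    have hbU : 0 ≤ (frobNorm U) ^ 2 := sq_nonneg _
    have hbV : 0 ≤ (frobNorm V) ^ 2 := sq_nonneg _
    constructor
    · rw [one_div_mul_eq_div, le_div_iff₀ hlminpos]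
      nlinarith
    · rw [one_div_mul_eq_div, le_div_iff₀ hlminpos]
      nlinarith
  refine ⟨Or.inl ?_, key⟩
  -- compactness
  set K : ℝ := 1 / lmin * ((vecNorm ystar) ^ 2 - 2 * (∑ i, ystar i * b i) + 2 * β) with hK
  set c : ℝ := Real.sqrt K with hc
  set box : Set (Matrix (Fin n) (Fin r) ℝ) :=
    {W | ∀ i j, W i j ∈ Set.Icc (-c) c} with hbox
  have hboxc : IsCompact box := by
    have : box = Set.univ.pi (fun _ : Fin n => Set.univ.pi fun _ : Fin r => Set.Icc (-c) c) := by
      ext W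
      simp only [hbox, Set.mem_setOf_eq]
      exact ⟨fun h i _ j _ => h i j, fun h i j => h i trivial j trivial⟩
    rw [this]
    exact isCompact_univ_pi fun i => isCompact_univ_pi fun j => isCompact_Icc
  have hentry : ∀ (W : Matrix (Fin n) (Fin r) ℝ), (frobNorm W) ^ 2 ≤ K →
      ∀ i j, W i j ∈ Set.Icc (-c) c := by
    intro W hW i j
    have h1 : (W i j) ^ 2 ≤ ∑ j', (W i j') ^ 2 :=
      Finset.single_le_sum (f := fun j' => (W i j') ^ 2) (fun _ _ => sq_nonneg _)
        (Finset.mem_univ j)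
    have h2 : (∑ j', (W i j') ^ 2) ≤ ∑ i', ∑ j', (W i' j') ^ 2 :=
      Finset.single_le_sum (f := fun i' => ∑ j', (W i' j') ^ 2)
        (fun _ _ => Finset.sum_nonneg fun _ _ => sq_nonneg _) (Finset.mem_univ i)
    have h3 : (W i j) ^ 2 ≤ K := by
      rw [aux_frobNorm_sq] at hW
      linarith
    have h4 : |W i j| ≤ c := by
      rw [hc, ← Real.sqrt_sq_eq_abs]
      exact Real.sqrt_le_sqrt h3
    exact abs_le.mp h4
  have hsub : Sset (r := r) (fun X => frobInner C X) A b ρ₀ β ⊆ box ×ˢ box := by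
    intro p hp
    obtain ⟨hU, hV⟩ := key p hp
    exact ⟨hentry p.1 hU, hentry p.2 hV⟩
  have hcont : Continuous (fun p : Matrix (Fin n) (Fin r) ℝ × Matrix (Fin n) (Fin r) ℝ =>
      frobInner C (p.1 * p.2ᵀ) + ρ₀ / 2 * (frobNorm (p.1 - p.2)) ^ 2
        + ρ₀ / 2 * (vecNorm (fun i => Aop A (p.1 * p.2ᵀ) i - b i)) ^ 2) := by
    simp only [frobInner, frobNorm, vecNorm, Aop, Matrix.mul_apply, Matrix.transpose_apply,
      Matrix.sub_apply]
    fun_prop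
  have hclosed : IsClosed (Sset (r := r) (fun X => frobInner C X) A b ρ₀ β) := by
    have : Sset (r := r) (fun X => frobInner C X) A b ρ₀ β =
        (fun p : Matrix (Fin n) (Fin r) ℝ × Matrix (Fin n) (Fin r) ℝ =>
          frobInner C (p.1 * p.2ᵀ) + ρ₀ / 2 * (frobNorm (p.1 - p.2)) ^ 2
            + ρ₀ / 2 * (vecNorm (fun i => Aop A (p.1 * p.2ᵀ) i - b i)) ^ 2) ⁻¹' Set.Iic β := rfl
    rw [this]
    exact isClosed_Iic.preimage hcont
  exact (hboxc.prod hboxc).of_isClosed_subset hclosed hsub
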